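/- Let (A, ¯(), ⊕, ·, 1) be an IMM* algebra. The following are equivalent: (i) for each a, b, c ∈ A the equation 1̄⊕x = (b̄·a)⊕(b·c) has a solution x in A; (ii) there is a unique ternary operation p on A such that (A, p, 1̄, 1̄⊕1, 1) is a mobi algebra and 1̄ ⊕ p(a,b,c) = (b̄·a)⊕(b·c) for all a, b, c ∈ A. -/
import Mathlib


/-- A mobi algebra: a set with a ternary operation `p` and constants `e0`, `half`, `e1`. -/
structure MobiAlgebra (A : Type*) where
  p : A → A → A → A
  e0 : A
  half : A
  e1 : A
  A1 : p e1 half e0 = half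
  A2 : ∀ a, p e0 a e1 = a
  A3 : ∀ a b, p a b a = a
  A4 : ∀ a b, p a e0 b = a
  A5 : ∀ a b, p a e1 b = b
  A6 : ∀ a a' b, p a half b = p a' half b → a = a'
  A7 : ∀ a b c1 c2 c3, p a (p c1 c2 c3) b = p (p a c1 b) c2 (p a c3 b)
  A8 : ∀ a1 a2 b1 b2 c,
    p (p a1 c b1) half (p a2 c b2) = p (p a1 half a2) c (p b1 half b2)

/-- An IMM* algebra: like an IMM algebra but with cancellative `⊕`
(axioms (C1)-(C9)). -/
structure IMMStar (C : Type*) where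
  inv : C → C
  oplus : C → C → C
  mul : C → C → C
  one : C
  C1 : ∀ a, oplus a a = a
  C2 : ∀ a b, oplus a b = oplus b a
  C3 : ∀ a a' b, oplus a b = oplus a' b → a = a'
  C4 : ∀ a b c d, oplus (oplus a b) (oplus c d) = oplus (oplus a c) (oplus b d)
  C5 : ∀ a b c, mul a (mul b c) = mul (mul a b) c
  C6 : ∀ a, mul a one = a
  C6' : ∀ a, mul one a = a
  C7 : ∀ a b c, mul a (oplus b c) = oplus (mul a b) (mul a c)
  C7' : ∀ a b c, mul (oplus a b) c = oplus (mul a c) (mul b c)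
  C8 : ∀ a, mul a (inv one) = inv one
  C8' : ∀ a, mul (inv one) a = inv one
  C9 : ∀ a, oplus (inv a) a = oplus (inv one) one

namespace MobiAux

variable {A : Type*}

theorem cancel_left (S : IMMStar A) {z x y : A}
    (h : S.oplus z x = S.oplus z y) : x = y :=
  S.C3 x y z (by rw [S.C2 x z, S.C2 y z]; exact h)

theorem hmul (S : IMMStar A) (x : A) :
    S.mul (S.oplus (S.inv S.one) S.one) x = S.oplus (S.inv S.one) x := by
  rw [S.C7', S.C8', S.C6']

theorem mobi_ext {M M' : MobiAlgebra A} (hp : M.p = M'.p) (h0 : M.e0 = M'.e0)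
    (hh : M.half = M'.half) (h1 : M.e1 = M'.e1) : M = M' := by
  cases M; cases M'
  simp only at hp h0 hh h1
  subst hp; subst h0; subst hh; subst h1
  rfl

section
variable (S : IMMStar A) (p : A → A → A → A)
  (hp : ∀ a b c, S.oplus (S.inv S.one) (p a b c) =
      S.oplus (S.mul (S.inv b) a) (S.mul b c))

include hp in
theorem P1 (a b c : A) :
    S.oplus (p a b c) (S.mul b a) = S.oplus a (S.mul b c) := by
  apply cancel_left S (z := S.inv S.one)
  calc S.oplus (S.inv S.one) (S.oplus (p a b c) (S.mul b a))
      = S.oplus (S.oplus (S.inv S.one) (S.inv S.one)) (S.oplus (p a b c) (S.mul b a)) := by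
        rw [S.C1 (S.inv S.one)]
    _ = S.oplus (S.oplus (S.inv S.one) (p a b c)) (S.oplus (S.inv S.one) (S.mul b a)) :=
        S.C4 _ _ _ _
    _ = S.oplus (S.oplus (S.mul (S.inv b) a) (S.mul b c))
          (S.oplus (S.mul b a) (S.inv S.one)) := by
        rw [hp, S.C2 (S.inv S.one) (S.mul b a)]
    _ = S.oplus (S.oplus (S.mul (S.inv b) a) (S.mul b a))
          (S.oplus (S.mul b c) (S.inv S.one)) := S.C4 _ _ _ _
    _ = S.oplus (S.mul (S.oplus (S.inv b) b) a) (S.oplus (S.mul b c) (S.inv S.one)) := by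
        rw [S.C7']
    _ = S.oplus (S.mul (S.oplus (S.inv S.one) S.one) a)
          (S.oplus (S.inv S.one) (S.mul b c)) := by
        rw [S.C9, S.C2 (S.mul b c) (S.inv S.one)]
    _ = S.oplus (S.oplus (S.inv S.one) a) (S.oplus (S.inv S.one) (S.mul b c)) := by
        rw [hmul]
    _ = S.oplus (S.oplus (S.inv S.one) (S.inv S.one)) (S.oplus a (S.mul b c)) :=
        (S.C4 _ _ _ _).symm
    _ = S.oplus (S.inv S.one) (S.oplus a (S.mul b c)) := by rw [S.C1 (S.inv S.one)]

include hp in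
theorem p_unique {z : A} (a b c : A)
    (hz : S.oplus z (S.mul b a) = S.oplus a (S.mul b c)) : z = p a b c :=
  S.C3 _ _ _ (hz.trans (P1 S p hp a b c).symm)

include hp in
theorem mA1 : p S.one (S.oplus (S.inv S.one) S.one) (S.inv S.one)
    = S.oplus (S.inv S.one) S.one := by
  refine (p_unique S p hp _ _ _ ?_).symm
  rw [S.C6 (S.oplus (S.inv S.one) S.one), S.C8 (S.oplus (S.inv S.one) S.one)]
  rw [S.C1 (S.oplus (S.inv S.one) S.one), S.C2 S.one (S.inv S.one)]

include hp in
theorem mA2 (a : A) : p (S.inv S.one) a S.one = a := by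
  refine (p_unique S p hp _ _ _ ?_).symm
  rw [S.C8 a, S.C6 a, S.C2 a (S.inv S.one)]

include hp in
theorem mA3 (a b : A) : p a b a = a :=
  (p_unique S p hp _ _ _ rfl).symm

include hp in
theorem mA4 (a b : A) : p a (S.inv S.one) b = a := by
  refine (p_unique S p hp _ _ _ ?_).symm
  rw [S.C8' a, S.C8' b]

include hp in
theorem mA5 (a b : A) : p a S.one b = b := by
  refine (p_unique S p hp _ _ _ ?_).symm
  rw [S.C6' a, S.C6' b, S.C2 b a]

include hp in
theorem phalf (a b : A) :
    p a (S.oplus (S.inv S.one) S.one) b = S.oplus a b := by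
  refine (p_unique S p hp _ _ _ ?_).symm
  rw [hmul S a, hmul S b]
  calc S.oplus (S.oplus a b) (S.oplus (S.inv S.one) a)
      = S.oplus (S.oplus a (S.inv S.one)) (S.oplus b a) := S.C4 _ _ _ _
    _ = S.oplus (S.oplus a (S.inv S.one)) (S.oplus a b) := by rw [S.C2 b a]
    _ = S.oplus (S.oplus a a) (S.oplus (S.inv S.one) b) := (S.C4 _ _ _ _).symm
    _ = S.oplus a (S.oplus (S.inv S.one) b) := by rw [S.C1 a]

include hp in
theorem mA6 (a a' b : A)
    (heq : p a (S.oplus (S.inv S.one) S.one) b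
         = p a' (S.oplus (S.inv S.one) S.one) b) : a = a' := by
  rw [phalf S p hp a b, phalf S p hp a' b] at heq
  exact S.C3 a a' b heq

include hp in
theorem mA7 (a b c1 c2 c3 : A) :
    p a (p c1 c2 c3) b = p (p a c1 b) c2 (p a c3 b) := by
  set q := p c1 c2 c3 with hq
  set u := p a c1 b with hu
  set v := p a c3 b with hv
  have F1 : S.oplus (p a q b) (S.mul q a) = S.oplus a (S.mul q b) := P1 S p hp a q b
  have F2 : S.oplus u (S.mul c1 a) = S.oplus a (S.mul c1 b) := P1 S p hp a c1 b
  have F3 : S.oplus v (S.mul c3 a) = S.oplus a (S.mul c3 b) := P1 S p hp a c3 b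
  have F4 : S.oplus q (S.mul c2 c1) = S.oplus c1 (S.mul c2 c3) := P1 S p hp c1 c2 c3
  apply p_unique S p hp
  -- suffices: p a q b ⊕ c2·u = u ⊕ c2·v
  apply S.C3 _ _ (S.oplus (S.mul q a) (S.mul c2 (S.mul c1 a)))
  calc S.oplus (S.oplus (p a q b) (S.mul c2 u))
        (S.oplus (S.mul q a) (S.mul c2 (S.mul c1 a)))
      = S.oplus (S.oplus (p a q b) (S.mul q a))
          (S.oplus (S.mul c2 u) (S.mul c2 (S.mul c1 a))) := by
        rw [S.C4 (p a q b) (S.mul c2 u) (S.mul q a) (S.mul c2 (S.mul c1 a)),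
          S.C4 (p a q b) (S.mul q a) (S.mul c2 u) (S.mul c2 (S.mul c1 a))]
    _ = S.oplus (S.oplus a (S.mul q b)) (S.mul c2 (S.oplus u (S.mul c1 a))) := by
        rw [F1, S.C7]
    _ = S.oplus (S.oplus a (S.mul q b)) (S.mul c2 (S.oplus a (S.mul c1 b))) := by rw [F2]
    _ = S.oplus (S.oplus a (S.mul q b)) (S.oplus (S.mul c2 a) (S.mul c2 (S.mul c1 b))) := by
        rw [S.C7]
    _ = S.oplus (S.oplus a (S.mul c2 a)) (S.oplus (S.mul q b) (S.mul c2 (S.mul c1 b))) :=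
        S.C4 _ _ _ _
    _ = S.oplus (S.oplus a (S.mul c2 a)) (S.mul (S.oplus q (S.mul c2 c1)) b) := by
        rw [S.C7', ← S.C5 c2 c1 b]
    _ = S.oplus (S.oplus a (S.mul c2 a)) (S.mul (S.oplus c1 (S.mul c2 c3)) b) := by rw [F4]
    _ = S.oplus (S.oplus a (S.mul c2 a))
          (S.oplus (S.mul c1 b) (S.mul (S.mul c2 c3) b)) := by rw [S.C7']
    _ = S.oplus (S.oplus a (S.mul c1 b))
          (S.oplus (S.mul c2 a) (S.mul (S.mul c2 c3) b)) := by
        rw [S.C4 a (S.mul c2 a) (S.mul c1 b) (S.mul (S.mul c2 c3) b),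
          S.C4 a (S.mul c1 b) (S.mul c2 a) (S.mul (S.mul c2 c3) b)]
    _ = S.oplus (S.oplus u (S.mul c1 a))
          (S.oplus (S.mul c2 a) (S.mul (S.mul c2 c3) b)) := by rw [F2]
    _ = S.oplus (S.oplus u (S.mul c1 a))
          (S.oplus (S.mul c2 a) (S.mul c2 (S.mul c3 b))) := by rw [S.C5 c2 c3 b]
    _ = S.oplus (S.oplus u (S.mul c1 a)) (S.mul c2 (S.oplus a (S.mul c3 b))) := by
        rw [S.C7]
    _ = S.oplus (S.oplus u (S.mul c1 a)) (S.mul c2 (S.oplus v (S.mul c3 a))) := by rw [F3]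
    _ = S.oplus (S.oplus u (S.mul c1 a))
          (S.oplus (S.mul c2 v) (S.mul c2 (S.mul c3 a))) := by rw [S.C7]
    _ = S.oplus (S.oplus u (S.mul c2 v))
          (S.oplus (S.mul c1 a) (S.mul c2 (S.mul c3 a))) := by
        rw [S.C4 u (S.mul c1 a) (S.mul c2 v) (S.mul c2 (S.mul c3 a)),
          S.C4 u (S.mul c2 v) (S.mul c1 a) (S.mul c2 (S.mul c3 a))]
    _ = S.oplus (S.oplus u (S.mul c2 v)) (S.mul (S.oplus c1 (S.mul c2 c3)) a) := by
        rw [S.C7', ← S.C5 c2 c3 a]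
    _ = S.oplus (S.oplus u (S.mul c2 v)) (S.mul (S.oplus q (S.mul c2 c1)) a) := by rw [F4]
    _ = S.oplus (S.oplus u (S.mul c2 v))
          (S.oplus (S.mul q a) (S.mul c2 (S.mul c1 a))) := by
        rw [S.C7', ← S.C5 c2 c1 a]

include hp in
theorem mA8 (a1 a2 b1 b2 c : A) :
    p (p a1 c b1) (S.oplus (S.inv S.one) S.one) (p a2 c b2)
      = p (p a1 (S.oplus (S.inv S.one) S.one) a2) c
          (p b1 (S.oplus (S.inv S.one) S.one) b2) := by
  rw [phalf S p hp (p a1 c b1) (p a2 c b2), phalf S p hp a1 a2, phalf S p hp b1 b2]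
  apply p_unique S p hp
  calc S.oplus (S.oplus (p a1 c b1) (p a2 c b2)) (S.mul c (S.oplus a1 a2))
      = S.oplus (S.oplus (p a1 c b1) (p a2 c b2))
          (S.oplus (S.mul c a1) (S.mul c a2)) := by rw [S.C7]
    _ = S.oplus (S.oplus (p a1 c b1) (S.mul c a1))
          (S.oplus (p a2 c b2) (S.mul c a2)) := S.C4 _ _ _ _
    _ = S.oplus (S.oplus a1 (S.mul c b1)) (S.oplus a2 (S.mul c b2)) := by
        rw [P1 S p hp a1 c b1, P1 S p hp a2 c b2]
    _ = S.oplus (S.oplus a1 a2) (S.oplus (S.mul c b1) (S.mul c b2)) := S.C4 _ _ _ _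
    _ = S.oplus (S.oplus a1 a2) (S.mul c (S.oplus b1 b2)) := by rw [← S.C7]

end

end MobiAux

/-- Theorem 6.3: for an IMM* algebra, the following are equivalent:
(i) for all a,b,c the equation 1̄⊕x = (b̄·a)⊕(b·c) has a solution;
(ii) there is a unique mobi algebra (A,p,1̄,1̄⊕1,1) such that
     1̄ ⊕ p(a,b,c) = (b̄·a)⊕(b·c). -/
theorem IMMStar_mobi_equiv {A : Type*} (S : IMMStar A) :
    (∀ a b c : A, ∃ x : A,
        S.oplus (S.inv S.one) x =
          S.oplus (S.mul (S.inv b) a) (S.mul b c)) ↔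
    (∃! M : MobiAlgebra A,
      M.e0 = S.inv S.one ∧
      M.half = S.oplus (S.inv S.one) S.one ∧
      M.e1 = S.one ∧
      ∀ a b c, S.oplus (S.inv S.one) (M.p a b c) =
        S.oplus (S.mul (S.inv b) a) (S.mul b c)) := by
  constructor
  · intro H
    set pf : A → A → A → A := fun a b c => (H a b c).choose with hpfdef
    have hp : ∀ a b c, S.oplus (S.inv S.one) (pf a b c) =
        S.oplus (S.mul (S.inv b) a) (S.mul b c) := fun a b c => (H a b c).choose_spec
    refine ⟨⟨pf, S.inv S.one, S.oplus (S.inv S.one) S.one, S.one,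
      MobiAux.mA1 S pf hp, MobiAux.mA2 S pf hp, MobiAux.mA3 S pf hp,
      MobiAux.mA4 S pf hp, MobiAux.mA5 S pf hp, MobiAux.mA6 S pf hp,
      MobiAux.mA7 S pf hp, MobiAux.mA8 S pf hp⟩, ⟨rfl, rfl, rfl, hp⟩, ?_⟩
    rintro M' ⟨h0, hh, h1, hdef⟩
    refine MobiAux.mobi_ext ?_ h0 hh h1
    funext a b c
    exact MobiAux.cancel_left S ((hdef a b c).trans (hp a b c).symm)
  · rintro ⟨M, ⟨-, -, -, hdef⟩, -⟩ a b c
    exact ⟨M.p a b c, hdef a b c⟩
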